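/- The point P = (625, 100000) lies on the elliptic curve E_0 : y^2 = x^3 + 10334x^2 + 9150625x and has infinite order in E_0(Q). -/

import Mathlib

/-- The elliptic curve `E₀ : y² = x³ + 10334x² + 9150625x` over `ℚ`. -/
def E0 : WeierstrassCurve.Affine ℚ :=
  { a₁ := 0, a₂ := 10334, a₃ := 0, a₄ := 9150625, a₆ := 0 }

namespace E0Aux

open WeierstrassCurve.Affine

instance : Fact (Nat.Prime 5) := ⟨by norm_num⟩

/-- shorthand for the 5-adic norm -/
noncomputable def nm (q : ℚ) : ℚ := padicNorm 5 q

lemma nm_mul (a b : ℚ) : nm (a*b) = nm a * nm b := padicNorm.mul a b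
lemma nm_neg (a : ℚ) : nm (-a) = nm a := padicNorm.neg a
lemma nm_nonneg (a : ℚ) : 0 ≤ nm a := padicNorm.nonneg a
lemma nm_zero : nm 0 = 0 := padicNorm.zero
lemma nm_add_le {a b c : ℚ} (ha : nm a ≤ c) (hb : nm b ≤ c) : nm (a + b) ≤ c := by
  unfold nm at *
  exact le_trans padicNorm.nonarchimedean (max_le ha hb)
lemma nm_add_eq {a b : ℚ} (h : nm b < nm a) : nm (a + b) = nm a := by
  unfold nm at *
  rw [padicNorm.add_eq_max_of_ne (ne_of_gt h)]
  exact max_eq_left h.le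
lemma nm_ne_zero {a : ℚ} (h : a ≠ 0) : nm a ≠ 0 := padicNorm.nonzero h
lemma ne_zero_of_nm {a : ℚ} (h : 0 < nm a) : a ≠ 0 := by
  rintro rfl; rw [nm_zero] at h; exact lt_irrefl 0 h
lemma nm_pos {a : ℚ} (h : a ≠ 0) : 0 < nm a :=
  lt_of_le_of_ne (nm_nonneg a) (Ne.symm (nm_ne_zero h))
lemma nm_int_le (z : ℤ) : nm z ≤ 1 := padicNorm.of_int z
lemma nm_sq (a : ℚ) : nm (a^2) = nm a ^ 2 := by rw [pow_two, nm_mul, pow_two]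
lemma nm_cube (a : ℚ) : nm (a^3) = nm a ^ 3 := by
  rw [pow_succ, nm_mul, nm_sq]; ring

lemma five_zpow_pos (a : ℤ) : (0:ℚ) < (5:ℚ)^a := zpow_pos (by norm_num) a
lemma five_zpow_ne (a : ℤ) : ((5:ℚ)^a) ≠ 0 := (five_zpow_pos a).ne'
lemma five_zpow_le {a b : ℤ} (h : a ≤ b) : (5:ℚ)^a ≤ (5:ℚ)^b :=
  zpow_le_zpow_right₀ (by norm_num) h
lemma five_zpow_lt {a b : ℤ} (h : a < b) : (5:ℚ)^a < (5:ℚ)^b :=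
  zpow_lt_zpow_right₀ (by norm_num) h
lemma five_zpow_le_iff {a b : ℤ} : (5:ℚ)^a ≤ (5:ℚ)^b ↔ a ≤ b :=
  zpow_le_zpow_iff_right₀ (by norm_num)
lemma five_zpow_inj {a b : ℤ} (h : (5:ℚ)^a = (5:ℚ)^b) : a = b :=
  zpow_right_injective₀ (by norm_num) (by norm_num) h
lemma five_zpow_mul (a b : ℤ) : (5:ℚ)^a * (5:ℚ)^b = (5:ℚ)^(a+b) :=
  (zpow_add₀ (by norm_num) a b).symm

lemma five_zpow_npow (c : ℤ) (n : ℕ) : ((5:ℚ)^c)^n = (5:ℚ)^(c*n) := by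
  rw [← zpow_natCast ((5:ℚ)^c) n, ← zpow_mul]

lemma nm_cmul_le {c t X : ℚ} (hc : nm c ≤ 1) (ht : nm t ≤ X) : nm (c * t) ≤ X := by
  rw [nm_mul]
  calc nm c * nm t ≤ 1 * nm t := mul_le_mul_of_nonneg_right hc (nm_nonneg t)
    _ = nm t := one_mul _
    _ ≤ X := ht

lemma nm_A : nm 10334 ≤ 1 := by exact_mod_cast nm_int_le 10334
lemma nm_B : nm 9150625 ≤ 1 := by exact_mod_cast nm_int_le 9150625
lemma nm_2B : nm (2*9150625 : ℚ) ≤ 1 := by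
  have := nm_int_le 18301250
  have h : ((18301250:ℤ):ℚ) = 2*9150625 := by norm_num
  rwa [h] at this

lemma E0_a₁ : E0.a₁ = 0 := rfl
lemma E0_a₂ : E0.a₂ = 10334 := rfl
lemma E0_a₃ : E0.a₃ = 0 := rfl
lemma E0_a₄ : E0.a₄ = 9150625 := rfl
lemma E0_a₆ : E0.a₆ = 0 := rfl

lemma E0_equation_iff (x y : ℚ) :
    E0.Equation x y ↔ y^2 = x^3 + 10334*x^2 + 9150625*x := by
  rw [WeierstrassCurve.Affine.equation_iff, E0_a₁, E0_a₂, E0_a₃, E0_a₄, E0_a₆]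
  constructor <;> intro h <;> linarith

lemma E0_negY (x y : ℚ) : E0.negY x y = -y := by
  rw [WeierstrassCurve.Affine.negY, E0_a₁, E0_a₃]; ring

/-- Level structure of points 5-adically close to the point at infinity. -/
lemma level (m : ℕ) (hm : 1 ≤ m) {x y : ℚ} (e : E0.Equation x y)
    (hy : (5:ℚ)^(3*(m:ℤ)) ≤ nm y) :
    ∃ k : ℕ, m ≤ k ∧ nm x = (5:ℚ)^(2*(k:ℤ)) ∧ nm y = (5:ℚ)^(3*(k:ℤ)) := by
  rw [E0_equation_iff] at e
  have h1y : 1 < nm y := by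
    refine lt_of_lt_of_le ?_ hy
    calc (1:ℚ) = (5:ℚ)^(0:ℤ) := by norm_num
    _ < (5:ℚ)^(3*(m:ℤ)) := five_zpow_lt (by omega)
  have hyne : y ≠ 0 := ne_zero_of_nm (lt_trans one_pos h1y)
  have hxne : x ≠ 0 := by
    rintro rfl
    apply hyne
    have h0 : y^2 = 0 := by rw [e]; ring
    exact pow_eq_zero_iff (by norm_num) |>.mp h0
  have h1x : 1 < nm x := by
    by_contra hle
    push_neg at hle
    have hb : nm (y^2) ≤ 1 := by
      rw [e]
      refine nm_add_le (nm_add_le ?_ (nm_cmul_le nm_A ?_)) (nm_cmul_le nm_B hle)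
      · rw [nm_cube]
        exact pow_le_one₀ (nm_nonneg x) hle
      · rw [nm_sq]
        exact pow_le_one₀ (nm_nonneg x) hle
    rw [nm_sq] at hb
    nlinarith [nm_nonneg y]
  obtain ⟨a, hxa0⟩ := padicNorm.values_discrete (p := 5) hxne
  obtain ⟨b, hyb0⟩ := padicNorm.values_discrete (p := 5) hyne
  set c : ℤ := -a with hc
  set d : ℤ := -b with hd
  have hxa : nm x = (5:ℚ)^c := by unfold nm; rw [hxa0]; norm_num
  have hyb : nm y = (5:ℚ)^d := by unfold nm; rw [hyb0]; norm_num
  have hc1 : 1 ≤ c := by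
    rw [hxa] at h1x
    have h0 : (5:ℚ)^(0:ℤ) < (5:ℚ)^c := by
      rw [zpow_zero]; exact h1x
    have := (zpow_lt_zpow_iff_right₀ (by norm_num : (1:ℚ) < 5)).mp h0
    omega
  have t1 : nm (x^3) = (5:ℚ)^(3*c) := by
    rw [nm_cube, hxa, five_zpow_npow]; congr 1; ring
  have t2 : nm (10334*x^2) ≤ (5:ℚ)^(2*c) := by
    refine nm_cmul_le nm_A ?_
    rw [nm_sq, hxa, five_zpow_npow]
    exact five_zpow_le (by omega)
  have t3 : nm (9150625*x) ≤ (5:ℚ)^c := by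
    refine nm_cmul_le nm_B ?_
    rw [hxa]
  have hlt1 : nm (10334*x^2) < nm (x^3) := by
    rw [t1]; exact lt_of_le_of_lt t2 (five_zpow_lt (by omega))
  have h12 : nm (x^3 + 10334*x^2) = (5:ℚ)^(3*c) := by
    rw [nm_add_eq hlt1, t1]
  have hlt2 : nm (9150625*x) < nm (x^3 + 10334*x^2) := by
    rw [h12]; exact lt_of_le_of_lt t3 (five_zpow_lt (by omega))
  have hall : nm (x^3 + 10334*x^2 + 9150625*x) = (5:ℚ)^(3*c) := by
    rw [nm_add_eq hlt2, h12]
  have hsq : nm (y^2) = (5:ℚ)^(2*d) := by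
    rw [nm_sq, hyb, five_zpow_npow]; congr 1; ring
  have hde : (5:ℚ)^(2*d) = (5:ℚ)^(3*c) := by rw [← hsq, ← hall, e]
  have h23 : 2*d = 3*c := five_zpow_inj hde
  have hmd : 3*(m:ℤ) ≤ d := by
    have := hy
    rw [hyb] at this
    exact five_zpow_le_iff.mp this
  refine ⟨(d - c).toNat, by omega, ?_, ?_⟩
  · rw [hxa]; congr 1; omega
  · rw [hyb]; congr 1; omega

/-- from `5^E ≤ B * 5^F` infer `5^(E-F) ≤ B` -/
lemma le_of_zpow_mul {B : ℚ} {E F : ℤ} (h : (5:ℚ)^E ≤ B * (5:ℚ)^F) :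
    (5:ℚ)^(E-F) ≤ B := by
  rw [zpow_sub₀ (by norm_num : (5:ℚ) ≠ 0)]
  exact (div_le_iff₀ (five_zpow_pos F)).mpr h

/-- from `A * 5^F ≤ C` infer `A ≤ C * 5^(-F)` -/
lemma mul_zpow_le {A C : ℚ} {F : ℤ} (h : A * (5:ℚ)^F ≤ C) :
    A ≤ C * (5:ℚ)^(-F) := by
  have := mul_le_mul_of_nonneg_right h (le_of_lt (five_zpow_pos (-F)))
  calc A = A * (5:ℚ)^F * (5:ℚ)^(-F) := by
        rw [mul_assoc, five_zpow_mul]; simp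
  _ ≤ C * (5:ℚ)^(-F) := this

lemma estimate (m k1 k2 : ℕ) (hm : 1 ≤ m) (hk1 : m ≤ k1) (hk2 : m ≤ k2)
    (x1 y1 x2 y2 l ν x3 y3 : ℚ)
    (nx1 : nm x1 = (5:ℚ)^(2*(k1:ℤ))) (ny1 : nm y1 = (5:ℚ)^(3*(k1:ℤ)))
    (nx2 : nm x2 = (5:ℚ)^(2*(k2:ℤ))) (ny2 : nm y2 = (5:ℚ)^(3*(k2:ℤ)))
    (id4 : ν*x2*(x1^2*y2 + x1*x2*y1 + 10334*x2*y1 + 10334*x1*y2 + 9150625*y1 + 9150625*y2)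
      = -(y1*(y1*y2^2 - 10334*x2^2*y1 - 9150625*x2*y2 - 9150625*x2*y1)))
    (id5 : l*y1*(y1*y2^2 - 10334*x2^2*y1 - 9150625*x2*y2 - 9150625*x2*y1)
      = -(ν*(x1^2*y2^2 + x1*x2*y1*y2 + x2^2*y1^2 + 10334*x1*y2^2 + 10334*x2*y1*y2 + 9150625*y2^2)))
    (id2 : y1*y2*y3 = ν^3 - 10334*ν^2*l + 9150625*ν*l^2)
    (id3 : x1*y2*y3 + x2*y1*y3 + x3*y1*y2 = -(10334*ν^2) + 2*9150625*ν*l) :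
    ((5:ℚ)^(3*(m:ℤ)) ≤ nm y3) ∧ nm (x1/y1 + x2/y2 + x3/y3) ≤ (5:ℚ)^(-(3*(m:ℤ))) := by
  have y1ne : y1 ≠ 0 := ne_zero_of_nm (by rw [ny1]; exact five_zpow_pos _)
  have y2ne : y2 ≠ 0 := ne_zero_of_nm (by rw [ny2]; exact five_zpow_pos _)
  -- the norm of D'
  have nD : nm (y1*y2^2 - 10334*x2^2*y1 - 9150625*x2*y2 - 9150625*x2*y1)
      = (5:ℚ)^(3*(k1:ℤ)+6*(k2:ℤ)) := by
    have hD : y1*y2^2 - 10334*x2^2*y1 - 9150625*x2*y2 - 9150625*x2*y1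
        = y1*y2^2 + (-(10334*x2^2*y1) + (-(9150625*x2*y2) + -(9150625*x2*y1))) := by ring
    rw [hD]
    have ha : nm (y1*y2^2) = (5:ℚ)^(3*(k1:ℤ)+6*(k2:ℤ)) := by
      rw [nm_mul, nm_sq, ny1, ny2, five_zpow_npow, five_zpow_mul]; congr 1; ring
    have hb : nm (-(10334*x2^2*y1) + (-(9150625*x2*y2) + -(9150625*x2*y1)))
        ≤ (5:ℚ)^(3*(k1:ℤ)+6*(k2:ℤ)-1) := by
      refine nm_add_le ?_ (nm_add_le ?_ ?_)
      · rw [nm_neg, show (10334:ℚ)*x2^2*y1 = 10334*(x2^2*y1) from by ring]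
        refine nm_cmul_le nm_A ?_
        rw [nm_mul, nm_sq, nx2, ny1, five_zpow_npow, five_zpow_mul]
        exact five_zpow_le (by omega)
      · rw [nm_neg, show (9150625:ℚ)*x2*y2 = 9150625*(x2*y2) from by ring]
        refine nm_cmul_le nm_B ?_
        rw [nm_mul, nx2, ny2, five_zpow_mul]
        exact five_zpow_le (by omega)
      · rw [nm_neg, show (9150625:ℚ)*x2*y1 = 9150625*(x2*y1) from by ring]
        refine nm_cmul_le nm_B ?_
        rw [nm_mul, nx2, ny1, five_zpow_mul]
        exact five_zpow_le (by omega)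
    rw [nm_add_eq (lt_of_le_of_lt hb (by rw [ha] at *; exact five_zpow_lt (by omega))), ha]
  -- the norm of S'
  have nS : nm (x1^2*y2 + x1*x2*y1 + 10334*x2*y1 + 10334*x1*y2 + 9150625*y1 + 9150625*y2)
      ≤ (5:ℚ)^(5*(k1:ℤ)+3*(k2:ℤ)-(m:ℤ)) := by
    refine nm_add_le (nm_add_le (nm_add_le (nm_add_le (nm_add_le ?_ ?_) ?_) ?_) ?_) ?_
    · rw [nm_mul, nm_sq, nx1, ny2, five_zpow_npow, five_zpow_mul]
      exact five_zpow_le (by omega)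
    · rw [nm_mul, nm_mul, nx1, nx2, ny1, five_zpow_mul, five_zpow_mul]
      exact five_zpow_le (by omega)
    · rw [show (10334:ℚ)*x2*y1 = 10334*(x2*y1) from by ring]
      refine nm_cmul_le nm_A ?_
      rw [nm_mul, nx2, ny1, five_zpow_mul]
      exact five_zpow_le (by omega)
    · rw [show (10334:ℚ)*x1*y2 = 10334*(x1*y2) from by ring]
      refine nm_cmul_le nm_A ?_
      rw [nm_mul, nx1, ny2, five_zpow_mul]
      exact five_zpow_le (by omega)
    · refine nm_cmul_le nm_B ?_
      rw [ny1]
      exact five_zpow_le (by omega)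
    · refine nm_cmul_le nm_B ?_
      rw [ny2]
      exact five_zpow_le (by omega)
  -- lower bound for nm ν
  have nν : (5:ℚ)^((k1:ℤ)+(k2:ℤ)+(m:ℤ)) ≤ nm ν := by
    have e4 := congrArg nm id4
    rw [nm_neg, nm_mul, nm_mul, nm_mul, ny1, nD, nx2, five_zpow_mul] at e4
    have key : (5:ℚ)^(3*(k1:ℤ)+(3*(k1:ℤ)+6*(k2:ℤ)))
        ≤ nm ν * ((5:ℚ)^(2*(k2:ℤ)) * (5:ℚ)^(5*(k1:ℤ)+3*(k2:ℤ)-(m:ℤ))) := by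
      rw [← e4, mul_assoc]
      refine mul_le_mul_of_nonneg_left ?_ (nm_nonneg ν)
      exact mul_le_mul_of_nonneg_left nS (le_of_lt (five_zpow_pos _))
    rw [five_zpow_mul] at key
    have := le_of_zpow_mul key
    convert this using 2
    omega
  have νne : ν ≠ 0 := ne_zero_of_nm (lt_of_lt_of_le (five_zpow_pos _) nν)
  have nνpos : 0 < nm ν := nm_pos νne
  -- the norm of N'
  have nN : nm (x1^2*y2^2 + x1*x2*y1*y2 + x2^2*y1^2 + 10334*x1*y2^2 + 10334*x2*y1*y2 + 9150625*y2^2)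
      ≤ (5:ℚ)^(6*(k1:ℤ)+6*(k2:ℤ)-2*(m:ℤ)) := by
    refine nm_add_le (nm_add_le (nm_add_le (nm_add_le (nm_add_le ?_ ?_) ?_) ?_) ?_) ?_
    · rw [nm_mul, nm_sq, nm_sq, nx1, ny2, five_zpow_npow, five_zpow_npow, five_zpow_mul]
      exact five_zpow_le (by omega)
    · rw [nm_mul, nm_mul, nm_mul, nx1, nx2, ny1, ny2, five_zpow_mul, five_zpow_mul,
        five_zpow_mul]
      exact five_zpow_le (by omega)
    · rw [nm_mul, nm_sq, nm_sq, nx2, ny1, five_zpow_npow, five_zpow_npow, five_zpow_mul]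
      exact five_zpow_le (by omega)
    · rw [show (10334:ℚ)*x1*y2^2 = 10334*(x1*y2^2) from by ring]
      refine nm_cmul_le nm_A ?_
      rw [nm_mul, nm_sq, nx1, ny2, five_zpow_npow, five_zpow_mul]
      exact five_zpow_le (by omega)
    · rw [show (10334:ℚ)*x2*y1*y2 = 10334*(x2*y1*y2) from by ring]
      refine nm_cmul_le nm_A ?_
      rw [nm_mul, nm_mul, nx2, ny1, ny2, five_zpow_mul, five_zpow_mul]
      exact five_zpow_le (by omega)
    · refine nm_cmul_le nm_B ?_
      rw [nm_sq, ny2, five_zpow_npow]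
      exact five_zpow_le (by omega)
  -- upper bound for nm l
  have nl : nm l ≤ nm ν * (5:ℚ)^(-(2*(m:ℤ))) := by
    have e5 := congrArg nm id5
    rw [nm_neg, nm_mul, nm_mul, nm_mul, ny1, nD, mul_assoc, five_zpow_mul] at e5
    have key : nm l * (5:ℚ)^(3*(k1:ℤ)+(3*(k1:ℤ)+6*(k2:ℤ)))
        ≤ (nm ν * (5:ℚ)^(-(2*(m:ℤ)))) * (5:ℚ)^(3*(k1:ℤ)+(3*(k1:ℤ)+6*(k2:ℤ))) := by
      rw [e5]
      calc nm ν * nm (x1^2*y2^2 + x1*x2*y1*y2 + x2^2*y1^2 + 10334*x1*y2^2 + 10334*x2*y1*y2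
            + 9150625*y2^2)
          ≤ nm ν * (5:ℚ)^(6*(k1:ℤ)+6*(k2:ℤ)-2*(m:ℤ)) :=
            mul_le_mul_of_nonneg_left nN (nm_nonneg ν)
        _ = (nm ν * (5:ℚ)^(-(2*(m:ℤ)))) * (5:ℚ)^(3*(k1:ℤ)+(3*(k1:ℤ)+6*(k2:ℤ))) := by
            rw [mul_assoc, five_zpow_mul,
              show -(2*(m:ℤ)) + (3*(k1:ℤ)+(3*(k1:ℤ)+6*(k2:ℤ)))
                = 6*(k1:ℤ)+6*(k2:ℤ)-2*(m:ℤ) from by ring]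
    exact le_of_mul_le_mul_right key (five_zpow_pos _)
  -- norm of the cubic in ν, l
  have hsmall : nm (- (10334*ν^2*l) + 9150625*ν*l^2) < nm (ν^3) := by
    have hb : nm (- (10334*ν^2*l) + 9150625*ν*l^2) ≤ nm ν ^ 3 * (5:ℚ)^(-(2*(m:ℤ))) := by
      refine nm_add_le ?_ ?_
      · rw [nm_neg, show (10334:ℚ)*ν^2*l = 10334*(ν^2*l) from by ring]
        refine nm_cmul_le nm_A ?_
        rw [nm_mul, nm_sq]
        calc nm ν^2 * nm l ≤ nm ν^2 * (nm ν * (5:ℚ)^(-(2*(m:ℤ)))) :=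
              mul_le_mul_of_nonneg_left nl (by positivity)
          _ = nm ν^3 * (5:ℚ)^(-(2*(m:ℤ))) := by ring
      · rw [show (9150625:ℚ)*ν*l^2 = 9150625*(ν*l^2) from by ring]
        refine nm_cmul_le nm_B ?_
        rw [nm_mul, nm_sq]
        calc nm ν * nm l^2 ≤ nm ν * (nm ν * (5:ℚ)^(-(2*(m:ℤ))))^2 := by
              refine mul_le_mul_of_nonneg_left ?_ (nm_nonneg ν)
              exact pow_le_pow_left₀ (nm_nonneg l) nl 2
          _ = nm ν^3 * ((5:ℚ)^(-(2*(m:ℤ))) * (5:ℚ)^(-(2*(m:ℤ)))) := by ring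
          _ ≤ nm ν^3 * ((5:ℚ)^(-(2*(m:ℤ))) * 1) := by
              refine mul_le_mul_of_nonneg_left ?_ (by positivity)
              refine mul_le_mul_of_nonneg_left ?_ (le_of_lt (five_zpow_pos _))
              calc (5:ℚ)^(-(2*(m:ℤ))) ≤ (5:ℚ)^(0:ℤ) := five_zpow_le (by omega)
                _ = 1 := by norm_num
          _ = nm ν^3 * (5:ℚ)^(-(2*(m:ℤ))) := by ring
    refine lt_of_le_of_lt hb ?_
    rw [nm_cube]
    calc nm ν^3 * (5:ℚ)^(-(2*(m:ℤ))) < nm ν^3 * 1 := by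
          refine mul_lt_mul_of_pos_left ?_ (by positivity)
          calc (5:ℚ)^(-(2*(m:ℤ))) < (5:ℚ)^(0:ℤ) := five_zpow_lt (by omega)
            _ = 1 := by norm_num
      _ = nm ν^3 := by ring
  have ncube : nm (ν^3 - 10334*ν^2*l + 9150625*ν*l^2) = nm ν^3 := by
    have h : ν^3 - 10334*ν^2*l + 9150625*ν*l^2
        = ν^3 + (-(10334*ν^2*l) + 9150625*ν*l^2) := by ring
    rw [h, nm_add_eq hsmall, nm_cube]
  -- norm of y3
  have ny3 : nm y3 * (5:ℚ)^(3*(k1:ℤ)+3*(k2:ℤ)) = nm ν^3 := by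
    have e2 := congrArg nm id2
    rw [nm_mul, nm_mul, ny1, ny2, ncube] at e2
    rw [← e2, ← five_zpow_mul]
    ring
  have goal1 : (5:ℚ)^(3*(m:ℤ)) ≤ nm y3 := by
    have hν3 : (5:ℚ)^(3*((k1:ℤ)+(k2:ℤ)+(m:ℤ))) ≤ nm ν^3 := by
      have := pow_le_pow_left₀ (le_of_lt (five_zpow_pos _)) nν 3
      rwa [five_zpow_npow, show ((k1:ℤ)+(k2:ℤ)+(m:ℤ))*(3:ℕ) = 3*((k1:ℤ)+(k2:ℤ)+(m:ℤ)) by push_cast; ring] at this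
    have h5 : (5:ℚ)^(3*(m:ℤ)) * (5:ℚ)^(3*(k1:ℤ)+3*(k2:ℤ)) ≤ nm y3 * (5:ℚ)^(3*(k1:ℤ)+3*(k2:ℤ)) := by
      rw [ny3, five_zpow_mul]
      refine le_trans (five_zpow_le (by omega)) hν3
    exact le_of_mul_le_mul_right h5 (five_zpow_pos _)
  refine ⟨goal1, ?_⟩
  have y3ne : y3 ≠ 0 := ne_zero_of_nm (lt_of_lt_of_le (five_zpow_pos _) goal1)
  -- the Δ bound
  have key : x1/y1 + x2/y2 + x3/y3 = (x1*y2*y3 + x2*y1*y3 + x3*y1*y2)/(y1*y2*y3) := by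
    field_simp
  rw [key]
  unfold nm
  rw [padicNorm.div]
  have hnum : nm (x1*y2*y3 + x2*y1*y3 + x3*y1*y2) ≤ nm ν^2 := by
    rw [id3]
    refine nm_add_le ?_ ?_
    · rw [nm_neg]
      refine nm_cmul_le nm_A ?_
      rw [nm_sq]
    · have h : (2:ℚ)*9150625*ν*l = (2*9150625)*(ν*l) := by ring
      rw [h]
      refine nm_cmul_le nm_2B ?_
      rw [nm_mul]
      calc nm ν * nm l ≤ nm ν * (nm ν * (5:ℚ)^(-(2*(m:ℤ)))) :=
            mul_le_mul_of_nonneg_left nl (nm_nonneg ν)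
        _ ≤ nm ν * (nm ν * 1) := by
            refine mul_le_mul_of_nonneg_left ?_ (nm_nonneg ν)
            refine mul_le_mul_of_nonneg_left ?_ (nm_nonneg ν)
            calc (5:ℚ)^(-(2*(m:ℤ))) ≤ (5:ℚ)^(0:ℤ) := five_zpow_le (by omega)
              _ = 1 := by norm_num
        _ = nm ν^2 := by ring
  have hden : nm (y1*y2*y3) = nm ν^3 := by
    rw [id2, ncube]
  show nm (x1*y2*y3 + x2*y1*y3 + x3*y1*y2) / nm (y1*y2*y3) ≤ _
  rw [hden]
  calc nm (x1*y2*y3 + x2*y1*y3 + x3*y1*y2) / nm ν^3 ≤ nm ν^2 / nm ν^3 := by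
        gcongr
    _ = (nm ν)⁻¹ := by
        field_simp
    _ ≤ ((5:ℚ)^((k1:ℤ)+(k2:ℤ)+(m:ℤ)))⁻¹ := by
        gcongr
    _ = (5:ℚ)^(-((k1:ℤ)+(k2:ℤ)+(m:ℤ))) := by
        rw [zpow_neg]
    _ ≤ (5:ℚ)^(-(3*(m:ℤ))) := five_zpow_le (by omega)

lemma chord_id4 (x1 y1 x2 y2 l : ℚ)
    (e1 : y1^2 = x1^3 + 10334*x1^2 + 9150625*x1)
    (e2 : y2^2 = x2^3 + 10334*x2^2 + 9150625*x2)
    (hw : x1 - x2 ≠ 0)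
    (hl : l * (x1 - x2) = y1 - y2) :
    (y1 - l*x1)*x2*(x1^2*y2 + x1*x2*y1 + 10334*x2*y1 + 10334*x1*y2 + 9150625*y1 + 9150625*y2) = -(y1*(y1*y2^2 - 10334*x2^2*y1 - 9150625*x2*y2 - 9150625*x2*y1)) := by
  apply mul_left_cancel₀ (pow_ne_zero 1 hw)
  linear_combination (norm := ring1) ((-9150625)*x1*x2*y2 + (-9150625)*x1*y1*x2 + (-10334)*x1*y1*x2^2 + (-10334)*x1^2*x2*y2 + (-1)*x1^2*y1*x2^2 + (-1)*x1^3*x2*y2) * hl + ((-1)*x2*y2^2 + x1*y2^2 + (-9150625)*x1*x2 + (-10334)*x1*x2^2 + (-1)*x1*x2^3) * e1 + ((9150625)*x1^2 + (10334)*x1^3 + x1^4) * e2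

lemma chord_id5 (x1 y1 x2 y2 l : ℚ)
    (e1 : y1^2 = x1^3 + 10334*x1^2 + 9150625*x1)
    (e2 : y2^2 = x2^3 + 10334*x2^2 + 9150625*x2)
    (hw : x1 - x2 ≠ 0)
    (hl : l * (x1 - x2) = y1 - y2) :
    l*y1*(y1*y2^2 - 10334*x2^2*y1 - 9150625*x2*y2 - 9150625*x2*y1) = -((y1 - l*x1)*(x1^2*y2^2 + x1*x2*y1*y2 + x2^2*y1^2 + 10334*x1*y2^2 + 10334*x2*y1*y2 + 9150625*y2^2)) := by
  apply mul_left_cancel₀ (pow_ne_zero 1 hw)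
  linear_combination (norm := ring1) ((-9150625)*y1*x2*y2 + y1^2*y2^2 + (-9150625)*y1^2*x2 + (-10334)*y1^2*x2^2 + (-9150625)*x1*y2^2 + (-10334)*x1*y1*x2*y2 + (-1)*x1*y1^2*x2^2 + (-10334)*x1^2*y2^2 + (-1)*x1^2*y1*x2*y2 + (-1)*x1^3*y2^2) * hl + ((-1)*y2^3 + y1*y2^2 + (-9150625)*y1*x2 + (-10334)*y1*x2^2 + (-1)*y1*x2^3) * e1 + ((9150625)*x1*y1 + (10334)*x1^2*y1 + x1^3*y1) * e2

lemma chord_id2 (x1 y1 x2 y2 l : ℚ)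
    (e1 : y1^2 = x1^3 + 10334*x1^2 + 9150625*x1)
    (e2 : y2^2 = x2^3 + 10334*x2^2 + 9150625*x2)
    (hw : x1 - x2 ≠ 0)
    (hl : l * (x1 - x2) = y1 - y2) :
    y1*y2*(l*((l^2 - 10334 - x1 - x2) - x1) + y1) = (y1 - l*x1)^3 - 10334*(y1 - l*x1)^2*l + 9150625*(y1 - l*x1)*l^2 := by
  apply mul_left_cancel₀ (pow_ne_zero 3 hw)
  linear_combination (norm := ring1) (y1*y2^3 + (-9150625)*y1*x2*y2 + y1*x2*y2^2*l + (-9150625)*y1*x2^2*l + (-10334)*y1*x2^2*y2 + y1*x2^2*y2*l^2 + (-1)*y1*x2^3*y2 + (-2)*y1^2*y2^2 + (9150625)*y1^2*x2 + (-1)*y1^2*x2*y2*l + (10334)*y1^2*x2^2 + y1^3*y2 + (9150625)*x1*y2^2 + (9150625)*x1*x2*y2*l + (9150625)*x1*x2^2*l^2 + (-9150625)*x1*y1*y2 + (-1)*x1*y1*y2^2*l + (9150625)*x1*y1*x2*l + (-2)*x1*y1*x2*y2*l^2 + (-20668)*x1*y1*x2^2*l + x1*y1^2*y2*l + (3)*x1*y1^2*x2^2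 + (-9150625)*x1^2*y2*l + (10334)*x1^2*y2^2 + (-18301250)*x1^2*x2*l^2 + (10334)*x1^2*x2*y2*l + (10334)*x1^2*x2^2*l^2 + (-10334)*x1^2*y1*y2 + x1^2*y1*y2*l^2 + (31002)*x1^2*y1*x2*l + (-3)*x1^2*y1*x2^2*l + (-3)*x1^2*y1^2*x2 + (9150625)*x1^3*l^2 + (-10334)*x1^3*y2*l + x1^3*y2^2 + (-20668)*x1^3*x2*l^2 + x1^3*x2*y2*l + x1^3*x2^2*l^2 + (-10334)*x1^3*y1*l + (-1)*x1^3*y1*y2 + (5)*x1^3*y1*x2*l + x1^3*y1^2 + (10334)*x1^4*l^2 + (-1)*x1^4*y2*l + (-2)*x1^4*x2*l^2 + (-2)*x1^4*y1*l + x1^5*l^2) * hl + ((3)*y2^3 + (-18301250)*x2*y2 + (-20668)*x2^2*y2 + (-2)*x2^3*y2 + (-3)*y1*y2^2 + (9150625)*y1*x2 + (10334)*y1*x2^2 + y1*x2^3 + y1^2*y2) * e1 + ((-1)*y1*y2^2 + (18301250)*x1*y2 + (-9150625)*x1*y1 + (20668)*x1^2*y2 + (-10334)*x1^2*y1 + (2)*x1^3*y2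 + (-1)*x1^3*y1) * e2

lemma chord_id3 (x1 y1 x2 y2 l : ℚ)
    (e1 : y1^2 = x1^3 + 10334*x1^2 + 9150625*x1)
    (e2 : y2^2 = x2^3 + 10334*x2^2 + 9150625*x2)
    (hw : x1 - x2 ≠ 0)
    (hl : l * (x1 - x2) = y1 - y2) :
    x1*y2*(l*((l^2 - 10334 - x1 - x2) - x1) + y1) + x2*y1*(l*((l^2 - 10334 - x1 - x2) - x1) + y1) + (l^2 - 10334 - x1 - x2)*y1*y2 = -(10334*(y1 - l*x1)^2) + 2*9150625*(y1 - l*x1)*l := by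
  apply mul_left_cancel₀ (pow_ne_zero 3 hw)
  linear_combination (norm := ring1) ((2)*y1*x2*y2^2 + (-18301250)*y1*x2^2 + (2)*y1*x2^2*y2*l + (-10334)*y1*x2^3 + y1*x2^3*l^2 + (-1)*y1*x2^4 + (-3)*y1^2*x2*y2 + (-1)*y1^2*x2^2*l + y1^3*x2 + x1*y2^3 + (18301250)*x1*x2*y2 + x1*x2*y2^2*l + (18301250)*x1*x2^2*l + (-10334)*x1*x2^2*y2 + x1*x2^2*y2*l^2 + (-1)*x1*x2^3*y2 + (-3)*x1*y1*y2^2 + (18301250)*x1*y1*x2 + (-4)*x1*y1*x2*y2*l + (-2)*x1*y1*x2^2*l^2 + (2)*x1*y1^2*y2 + x1*y1^2*x2*l + (-18301250)*x1^2*y2 + (-1)*x1^2*y2^2*l + (-36602500)*x1^2*x2*l + (31002)*x1^2*x2*y2 + (-2)*x1^2*x2*y2*l^2 + (10334)*x1^2*x2^2*l + (2)*x1^2*y1*y2*l + (20668)*x1^2*y1*x2 + x1^2*y1*x2*l^2 + (3)*x1^2*y1*x2^2 + (18301250)*x1^3*l + (-20668)*x1^3*y2 + x1^3*y2*l^2 +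 (-20668)*x1^3*x2*l + (3)*x1^3*x2*y2 + (-10334)*x1^3*y1 + (-2)*x1^3*y1*x2 + (10334)*x1^4*l + (-2)*x1^4*y2) * hl + ((5)*x2*y2^2 + (-18301250)*x2^2 + (-20668)*x2^3 + (-2)*x2^4 + (-4)*y1*x2*y2 + y1^2*x2 + (-5)*x1*y2^2 + (27451875)*x1*x2 + (31002)*x1*x2^2 + (3)*x1*x2^3 + (2)*x1*y1*y2) * e1 + ((-2)*y1*x2*y2 + (-1)*x1*y2^2 + (18301250)*x1*x2 + (4)*x1*y1*y2 + (-27451875)*x1^2 + (20668)*x1^2*x2 + (-31002)*x1^3 + (2)*x1^3*x2 + (-3)*x1^4) * e2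

lemma tan_id4 (x1 y1 l : ℚ)
    (e1 : y1^2 = x1^3 + 10334*x1^2 + 9150625*x1)
    (hw : 2*y1 ≠ 0)
    (hl : l * (2*y1) = 3*x1^2 + 20668*x1 + 9150625) :
    (y1 - l*x1)*x1*(x1^2*y1 + x1*x1*y1 + 10334*x1*y1 + 10334*x1*y1 + 9150625*y1 + 9150625*y1) = -(y1*(y1*y1^2 - 10334*x1^2*y1 - 9150625*x1*y1 - 9150625*x1*y1)) := by
  apply mul_left_cancel₀ (pow_ne_zero 1 hw)
  linear_combination (norm := ring1) ((-18301250)*x1^2*y1 + (-20668)*x1^3*y1 + (-2)*x1^4*y1) * hl + ((2)*y1^3 + (18301250)*x1*y1 + (41336)*x1^2*y1 + (6)*x1^3*y1) * e1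

lemma tan_id5 (x1 y1 l : ℚ)
    (e1 : y1^2 = x1^3 + 10334*x1^2 + 9150625*x1)
    (hw : 2*y1 ≠ 0)
    (hl : l * (2*y1) = 3*x1^2 + 20668*x1 + 9150625) :
    l*y1*(y1*y1^2 - 10334*x1^2*y1 - 9150625*x1*y1 - 9150625*x1*y1) = -((y1 - l*x1)*(x1^2*y1^2 + x1*x1*y1*y1 + x1^2*y1^2 + 10334*x1*y1^2 + 10334*x1*y1*y1 + 9150625*y1^2)) := by
  apply mul_left_cancel₀ (pow_ne_zero 1 hw)
  linear_combination (norm := ring1) (y1^4 + (-27451875)*x1*y1^2 + (-31002)*x1^2*y1^2 + (-3)*x1^3*y1^2) * hl + ((27451875)*y1^2 + (62004)*x1*y1^2 + (9)*x1^2*y1^2) * e1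

lemma tan_id2 (x1 y1 l : ℚ)
    (e1 : y1^2 = x1^3 + 10334*x1^2 + 9150625*x1)
    (hw : 2*y1 ≠ 0)
    (hl : l * (2*y1) = 3*x1^2 + 20668*x1 + 9150625) :
    y1*y1*(l*((l^2 - 10334 - x1 - x1) - x1) + y1) = (y1 - l*x1)^3 - 10334*(y1 - l*x1)^2*l + 9150625*(y1 - l*x1)*l^2 := by
  apply mul_left_cancel₀ (pow_ne_zero 3 hw)
  linear_combination (norm := ring1) ((-83733937890625)*y1^2 + (-18301250)*y1^3*l + (4)*y1^4*l^2 + (766217865410400390625)*x1 + (167467875781250)*x1*y1*l + (-378250235000)*x1*y1^2 + (36602500)*x1*y1^2*l^2 + (-41336)*x1*y1^3*l + (4326532570808593750)*x1^2 + (567375352500)*x1^2*y1*l + (-482069974)*x1^2*y1^2 + (41336)*x1^2*y1^2*l^2 + (-6)*x1^2*y1^3*l + (8403813422214375)*x1^3 + (500371224)*x1^3*y1*l + (-124008)*x1^3*y1^2 + (4)*x1^3*y1^2*l^2 + (6494712051316)*x1^4 + (103340)*x1^4*y1*l + (-9)*x1^4*y1^2 + (1845924271)*x1^5 + (6)*x1^5*y1*l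 + (217014)*x1^6 + (9)*x1^7) * hl + ((-766217865410400390625) + (-5191839084970312500)*x1 + (-12480119226485625)*x1^2 + (-12232923632632)*x1^3 + (-4091562891)*x1^4 + (-558036)*x1^5 + (-27)*x1^6) * e1

lemma tan_id3 (x1 y1 l : ℚ)
    (e1 : y1^2 = x1^3 + 10334*x1^2 + 9150625*x1)
    (hw : 2*y1 ≠ 0)
    (hl : l * (2*y1) = 3*x1^2 + 20668*x1 + 9150625) :
    x1*y1*(l*((l^2 - 10334 - x1 - x1) - x1) + y1) + x1*y1*(l*((l^2 - 10334 - x1 - x1) - x1) + y1) + (l^2 - 10334 - x1 - x1)*y1*y1 = -(10334*(y1 - l*x1)^2) + 2*9150625*(y1 - l*x1)*l := by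
  apply mul_left_cancel₀ (pow_ne_zero 3 hw)
  linear_combination (norm := ring1) ((-54903750)*y1^3 + (4)*y1^4*l + (502403627343750)*x1*y1 + (109807500)*x1*y1^2*l + (-124008)*x1*y1^3 + (8)*x1*y1^3*l^2 + (1702126057500)*x1^2*y1 + (124008)*x1^2*y1^2*l + (-18)*x1^2*y1^3 + (1501113672)*x1^3*y1 + (12)*x1^3*y1^2*l + (310020)*x1^4*y1 + (18)*x1^5*y1) * hl + ((-502403627343750)*y1 + (-2269501410000)*x1*y1 + (-2892419844)*x1^2*y1 + (-744048)*x1^3*y1 + (-54)*x1^4*y1) * e1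


lemma E0_addX (x1 x2 l : ℚ) : E0.addX x1 x2 l = l^2 - 10334 - x1 - x2 := by
  rw [WeierstrassCurve.Affine.addX, E0_a₁, E0_a₂]; ring

lemma E0_negAddY (x1 x2 y1 l : ℚ) :
    E0.negAddY x1 x2 y1 l = l*((l^2 - 10334 - x1 - x2) - x1) + y1 := by
  rw [WeierstrassCurve.Affine.negAddY, E0_addX]

lemma E0_addY (x1 x2 y1 l : ℚ) :
    E0.addY x1 x2 y1 l = -(l*((l^2 - 10334 - x1 - x2) - x1) + y1) := by
  rw [WeierstrassCurve.Affine.addY, E0_negY, E0_negAddY]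

open WeierstrassCurve.Affine in
/-- the `z = x/y` coordinate of a point (0 at the point at infinity) -/
noncomputable def zc : E0.Point → ℚ
  | .zero => 0
  | @Point.some _ _ _ x y _ => x / y

lemma zc_zero : zc 0 = 0 := rfl

lemma zc_some {x y : ℚ} (h : E0.Nonsingular x y) :
    zc (WeierstrassCurve.Affine.Point.some _ _ h) = x / y := rfl

open WeierstrassCurve.Affine in
/-- `P` is `O` or 5-adically within level `m` of `O`. -/
def Good (m : ℕ) (P : E0.Point) : Prop :=
  P = 0 ∨ ∃ x y, ∃ h : E0.Nonsingular x y,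
    P = Point.some _ _ h ∧ (5:ℚ)^(3*(m:ℤ)) ≤ nm y

open WeierstrassCurve.Affine in
/-- coordinate-level master step: norms of the coordinates of a sum -/
lemma step (m k1 k2 : ℕ) (hm : 1 ≤ m) (hk1 : m ≤ k1) (hk2 : m ≤ k2)
    (x1 y1 x2 y2 : ℚ)
    (e1 : y1^2 = x1^3 + 10334*x1^2 + 9150625*x1)
    (e2 : y2^2 = x2^3 + 10334*x2^2 + 9150625*x2)
    (nx1 : nm x1 = (5:ℚ)^(2*(k1:ℤ))) (ny1 : nm y1 = (5:ℚ)^(3*(k1:ℤ)))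
    (nx2 : nm x2 = (5:ℚ)^(2*(k2:ℤ))) (ny2 : nm y2 = (5:ℚ)^(3*(k2:ℤ)))
    (hxy : x1 = x2 → y1 ≠ E0.negY x2 y2) :
    ((5:ℚ)^(3*(m:ℤ)) ≤ nm (E0.addY x1 x2 y1 (E0.slope x1 x2 y1 y2))) ∧
      nm (E0.addX x1 x2 (E0.slope x1 x2 y1 y2) / E0.addY x1 x2 y1 (E0.slope x1 x2 y1 y2)
        - x1/y1 - x2/y2) ≤ (5:ℚ)^(-(3*(m:ℤ))) := by
  have y1ne : y1 ≠ 0 := ne_zero_of_nm (by rw [ny1]; exact five_zpow_pos _)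
  have y2ne : y2 ≠ 0 := ne_zero_of_nm (by rw [ny2]; exact five_zpow_pos _)
  by_cases hx : x1 = x2
  · -- tangent case
    have hyne : y1 ≠ E0.negY x2 y2 := hxy hx
    have hyy : y1 = y2 := by
      have hsq : (y1 - y2)*(y1 + y2) = 0 := by
        linear_combination e1 - e2
          + (x1^2 + x1*x2 + x2^2 + 10334*x1 + 10334*x2 + 9150625) * hx
      rcases mul_eq_zero.mp hsq with h0 | h0
      · linarith
      · exfalso
        apply hyne
        rw [E0_negY]
        linarith
    subst hx
    subst hyy
    have hyne' : y1 ≠ E0.negY x1 y1 := hyne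
    obtain ⟨l, hldef⟩ : ∃ l, l = E0.slope x1 x1 y1 y1 := ⟨_, rfl⟩
    have h2y : 2*y1 ≠ 0 := by
      intro hc
      rw [E0_negY] at hyne'
      apply hyne'
      linarith
    have hsl : l = (3*x1^2 + 20668*x1 + 9150625)/(2*y1) := by
      rw [hldef, slope_of_Y_ne rfl hyne', E0_negY, E0_a₁, E0_a₂, E0_a₄]
      congr 1 <;> ring
    have hl : l * (2*y1) = 3*x1^2 + 20668*x1 + 9150625 := by
      rw [hsl, div_mul_cancel₀ _ h2y]
    have id4 := tan_id4 x1 y1 l e1 h2y hl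
    have id5 := tan_id5 x1 y1 l e1 h2y hl
    have id2 := tan_id2 x1 y1 l e1 h2y hl
    have id3 := tan_id3 x1 y1 l e1 h2y hl
    obtain ⟨g1, g2⟩ := estimate m k1 k1 hm hk1 hk1 x1 y1 x1 y1 l (y1 - l*x1)
      (l^2 - 10334 - x1 - x1) (l*((l^2 - 10334 - x1 - x1) - x1) + y1)
      nx1 ny1 nx1 ny1 id4 id5 id2 id3
    rw [← hldef, E0_addY, E0_addX]
    constructor
    · rw [nm_neg]
      exact g1
    · have hrw : (l^2 - 10334 - x1 - x1) / -(l*((l^2 - 10334 - x1 - x1) - x1) + y1)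
            - x1/y1 - x1/y1
          = -(x1/y1 + x1/y1 + (l^2 - 10334 - x1 - x1)/(l*((l^2 - 10334 - x1 - x1) - x1) + y1)) := by
        rw [div_neg]
        ring
      rw [hrw, nm_neg]
      exact g2
  · -- chord case
    obtain ⟨l, hldef⟩ : ∃ l, l = E0.slope x1 x2 y1 y2 := ⟨_, rfl⟩
    have hw : x1 - x2 ≠ 0 := sub_ne_zero.mpr hx
    have hsl : l = (y1 - y2)/(x1 - x2) := by
      rw [hldef, slope_of_X_ne hx]
    have hl : l * (x1 - x2) = y1 - y2 := by
      rw [hsl, div_mul_cancel₀ _ hw]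
    have id4 := chord_id4 x1 y1 x2 y2 l e1 e2 hw hl
    have id5 := chord_id5 x1 y1 x2 y2 l e1 e2 hw hl
    have id2 := chord_id2 x1 y1 x2 y2 l e1 e2 hw hl
    have id3 := chord_id3 x1 y1 x2 y2 l e1 e2 hw hl
    obtain ⟨g1, g2⟩ := estimate m k1 k2 hm hk1 hk2 x1 y1 x2 y2 l (y1 - l*x1)
      (l^2 - 10334 - x1 - x2) (l*((l^2 - 10334 - x1 - x2) - x1) + y1)
      nx1 ny1 nx2 ny2 id4 id5 id2 id3
    rw [← hldef, E0_addY, E0_addX]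
    constructor
    · rw [nm_neg]
      exact g1
    · have hrw : (l^2 - 10334 - x1 - x2) / -(l*((l^2 - 10334 - x1 - x2) - x1) + y1)
            - x1/y1 - x2/y2
          = -(x1/y1 + x2/y2 + (l^2 - 10334 - x1 - x2)/(l*((l^2 - 10334 - x1 - x2) - x1) + y1)) := by
        rw [div_neg]
        ring
      rw [hrw, nm_neg]
      exact g2

open WeierstrassCurve.Affine Point in
lemma add_est (m : ℕ) (hm : 1 ≤ m) (P Q : E0.Point) (hP : Good m P) (hQ : Good m Q) :
    Good m (P + Q) ∧ nm (zc (P + Q) - zc P - zc Q) ≤ (5:ℚ)^(-(3*(m:ℤ))) := by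
  rcases hP with rfl | ⟨x1, y1, h1, rfl, hny1⟩
  · rw [zero_add]
    refine ⟨hQ, ?_⟩
    rw [zc_zero]
    have h0 : zc Q - 0 - zc Q = 0 := by ring
    rw [h0, nm_zero]
    exact le_of_lt (five_zpow_pos _)
  rcases hQ with rfl | ⟨x2, y2, h2, rfl, hny2⟩
  · rw [add_zero]
    refine ⟨Or.inr ⟨x1, y1, h1, rfl, hny1⟩, ?_⟩
    rw [zc_zero]
    have h0 : zc (Point.some _ _ h1) - zc (Point.some _ _ h1) - 0 = 0 := by ring
    rw [h0, nm_zero]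
    exact le_of_lt (five_zpow_pos _)
  obtain ⟨k1, hk1, nx1, ny1⟩ := level m hm h1.1 hny1
  obtain ⟨k2, hk2, nx2, ny2⟩ := level m hm h2.1 hny2
  have e1 := (E0_equation_iff x1 y1).mp h1.1
  have e2 := (E0_equation_iff x2 y2).mp h2.1
  have y1ne : y1 ≠ 0 := ne_zero_of_nm (by rw [ny1]; exact five_zpow_pos _)
  have y2ne : y2 ≠ 0 := ne_zero_of_nm (by rw [ny2]; exact five_zpow_pos _)
  by_cases hyeq : x1 = x2 ∧ y1 = E0.negY x2 y2
  · rw [add_of_Y_eq hyeq.1 hyeq.2]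
    refine ⟨Or.inl rfl, ?_⟩
    have hy12 : y1 = -y2 := by rw [hyeq.2, E0_negY]
    have h0 : zc (0 : E0.Point) - zc (Point.some _ _ h1) - zc (Point.some _ _ h2) = 0 := by
      rw [zc_zero, zc_some, zc_some, hyeq.1, hy12, div_neg]
      ring
    rw [h0, nm_zero]
    exact le_of_lt (five_zpow_pos _)
  · have hxy : x1 = x2 → y1 ≠ E0.negY x2 y2 := fun ha hb => hyeq ⟨ha, hb⟩
    obtain ⟨g1, g2⟩ := step m k1 k2 hm hk1 hk2 x1 y1 x2 y2 e1 e2 nx1 ny1 nx2 ny2 hxy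
    rw [add_some hyeq]
    exact ⟨Or.inr ⟨_, _, _, rfl, g1⟩, g2⟩

lemma nsmul_est (m : ℕ) (hm : 1 ≤ m) (Q : E0.Point) (hQ : Good m Q) (j : ℕ) :
    Good m (j • Q) ∧ nm (zc (j • Q) - (j:ℚ) * zc Q) ≤ (5:ℚ)^(-(3*(m:ℤ))) := by
  induction j with
  | zero =>
      rw [zero_nsmul]
      refine ⟨Or.inl rfl, ?_⟩
      have h0 : zc (0 : E0.Point) - (0:ℕ) * zc Q = 0 := by rw [zc_zero]; push_cast; ring
      rw [h0, nm_zero]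
      exact le_of_lt (five_zpow_pos _)
  | succ j ih =>
      obtain ⟨g1, g2⟩ := add_est m hm (j • Q) Q ih.1 hQ
      rw [succ_nsmul]
      refine ⟨g1, ?_⟩
      have h0 : zc (j • Q + Q) - ((j:ℕ)+1:ℚ) * zc Q
          = (zc (j • Q + Q) - zc (j • Q) - zc Q) + (zc (j • Q) - (j:ℚ) * zc Q) := by ring
      have h1 : ((j+1:ℕ):ℚ) = ((j:ℕ):ℚ) + 1 := by push_cast; ring
      rw [h1, h0]
      exact nm_add_le g2 ih.2


open WeierstrassCurve.Affine in
lemma nm_addY_base (hy : (100000:ℚ) ≠ E0.negY 625 100000) :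
    nm (E0.addY 625 625 100000 (E0.slope 625 625 100000 100000)) = (5:ℚ)^((3:ℤ)) := by
  have hsl : E0.slope 625 625 100000 100000 = 581/5 := by
    rw [slope_of_Y_ne rfl hy, E0_negY, E0_a₁, E0_a₂, E0_a₄]
    norm_num
  have haddY : E0.addY 625 625 100000 (E0.slope 625 625 100000 100000) = -(31287216/125) := by
    rw [hsl, E0_addY]
    norm_num
  rw [haddY, nm_neg]
  have h1 : (31287216/125 : ℚ) = 31287216/125 := rfl
  unfold nm
  rw [show (31287216/125 : ℚ) = ((31287216:ℤ):ℚ)/((125:ℤ):ℚ) by norm_num, padicNorm.div]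
  have hn : padicNorm 5 ((31287216:ℤ):ℚ) = 1 :=
    padicNorm.int_eq_one_iff (p := 5) 31287216 |>.mpr (by norm_num)
  have hd : padicNorm 5 ((125:ℤ):ℚ) = (5:ℚ)^(-(3:ℤ)) := by
    have h5 : padicNorm 5 ((5:ℕ):ℚ) = ((5:ℕ):ℚ)⁻¹ := padicNorm.padicNorm_p (by norm_num)
    push_cast at h5
    rw [show ((125:ℤ):ℚ) = 5*(5*5) by norm_num, padicNorm.mul, padicNorm.mul, h5, zpow_neg]
    norm_num
  rw [hn, hd]
  rw [zpow_neg]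
  norm_num

open WeierstrassCurve.Affine Point in
theorem main_aux (h : E0.Nonsingular 625 100000) :
    ¬ IsOfFinAddOrder (WeierstrassCurve.Affine.Point.some _ _ h) := by
  intro hfin
  have hy : (100000:ℚ) ≠ E0.negY 625 100000 := by rw [E0_negY]; norm_num
  -- the double R := P + P
  have hR : Point.some _ _ h + Point.some _ _ h = Point.some _ _ (nonsingular_add h h fun hc => hy hc.2) :=
    add_some fun hc => hy hc.2
  have hfinR : IsOfFinAddOrder (Point.some _ _ h + Point.some _ _ h) := hfin.add hfin
  have hGoodR : Good 1 (Point.some _ _ h + Point.some _ _ h) := by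
    rw [hR]
    exact Or.inr ⟨_, _, _, rfl, by rw [nm_addY_base hy]; exact five_zpow_le (by norm_num)⟩
  have hRne : Point.some _ _ h + Point.some _ _ h ≠ 0 := by
    rw [hR]
    exact some_ne_zero _
  set R := Point.some _ _ h + Point.some _ _ h with hRdef
  set N := addOrderOf R with hNdef
  have hNpos : 0 < N := hfinR.addOrderOf_pos
  have hN1 : N ≠ 1 := by
    intro h1
    apply hRne
    have := addOrderOf_nsmul_eq_zero R
    rwa [← hNdef, h1, one_nsmul] at this
  set q := N.minFac with hqdef
  have hq : q.Prime := Nat.minFac_prime hN1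
  set Q := (N / q) • R with hQdef
  have hQ0 : q • Q = 0 := by
    rw [hQdef, ← mul_nsmul, Nat.div_mul_cancel (Nat.minFac_dvd N), hNdef]
    exact addOrderOf_nsmul_eq_zero R
  have hQne : Q ≠ 0 := by
    intro h0
    have hdvd : N ∣ N / q := by
      rw [hNdef]
      exact addOrderOf_dvd_iff_nsmul_eq_zero.mpr (by rw [← hQdef]; exact h0)
    have hlt : N / q < N := Nat.div_lt_self hNpos hq.one_lt
    have hle : N ≤ N / q := Nat.le_of_dvd (Nat.div_pos (Nat.minFac_le hNpos) hq.pos) hdvd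
    omega
  have hGoodQ : Good 1 Q := (nsmul_est 1 le_rfl R hGoodR (N / q)).1
  rcases hGoodQ with h0 | ⟨x, y, hns, hQeq, hny⟩
  · exact hQne h0
  obtain ⟨k, hk1, nx, ny⟩ := level 1 le_rfl hns.1 hny
  have hGoodQk : Good k Q := Or.inr ⟨x, y, hns, hQeq, le_of_eq ny.symm⟩
  have hest := (nsmul_est k hk1 Q hGoodQk q).2
  rw [hQ0, zc_zero] at hest
  have hzQ : nm (zc Q) = (5:ℚ)^(-(k:ℤ)) := by
    rw [hQeq, zc_some]
    unfold nm
    rw [padicNorm.div]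
    show nm x / nm y = _
    rw [nx, ny, ← zpow_sub₀ (by norm_num : (5:ℚ) ≠ 0)]
    congr 1
    omega
  have hq5 : nm ((q:ℕ):ℚ) * (5:ℚ)^(-(k:ℤ)) ≤ (5:ℚ)^(-(3*(k:ℤ))) := by
    have h0 : (0:ℚ) - (q:ℚ) * zc Q = -((q:ℚ) * zc Q) := by ring
    rw [h0, nm_neg, nm_mul, hzQ] at hest
    exact hest
  have hq52 : nm ((q:ℕ):ℚ) ≤ (5:ℚ)^(-(2:ℤ)) := by
    have := mul_zpow_le hq5
    rw [five_zpow_mul] at this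
    refine le_trans this (five_zpow_le (by omega))
  have hdvd25 : ((5^2 : ℕ) : ℤ) ∣ ((q:ℕ):ℤ) := by
    rw [padicNorm.dvd_iff_norm_le]
    have hcast : (((q:ℕ):ℤ):ℚ) = ((q:ℕ):ℚ) := by push_cast; ring
    rw [hcast]
    exact_mod_cast hq52
  have hdvd25' : (25:ℕ) ∣ q := by
    have := Int.ofNat_dvd.mp (by exact_mod_cast hdvd25)
    exact this
  have h5q : (5:ℕ) ∣ q := dvd_trans (by norm_num) hdvd25'
  have hq5eq : q = 5 := ((Nat.prime_dvd_prime_iff_eq (by norm_num) hq).mp h5q).symm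
  rw [hq5eq] at hdvd25'
  norm_num at hdvd25'

end E0Aux

theorem stmt_15 :
    E0.Equation 625 100000 ∧
      ∀ h : E0.Nonsingular 625 100000,
        ¬ IsOfFinAddOrder (WeierstrassCurve.Affine.Point.some _ _ h) := by
  constructor
  · rw [E0Aux.E0_equation_iff]
    norm_num
  · exact E0Aux.main_aux
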